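/- Let w ∈ ℝ² with |w| ≥ N₁ > 0, let N₂ > 0, c > 0, and λ ≥ 1. Suppose additionally N₂ ≤ N₁/10 and c ≤ N₁²/10. Then the set B = {(x,y) ∈ ℝ² : |x² + y² + 2(ax + by)| ≤ c, x² + y² ≤ N₂²}, where w = (a,b), is contained in the annular sector between the circles of radii r₂ = √(a²+b²-c) and r₁ = √(a²+b²+c) centered at (-a,-b), intersected with the angular sector of aperture 2θ at (-a,-b), where sin θ = N₂/√(a²+b²); consequently the area of B is at most C·c·N₂/N₁ for an absolute constant C. -/

import Mathlib

open Real MeasureTheory InnerProductGeometry RealInnerProductSpace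


lemma abs_le_of_sq' {x N : ℝ} (hN : 0 ≤ N) (h : x^2 ≤ N^2) : |x| ≤ N := by
  have := Real.sqrt_le_sqrt h
  rwa [Real.sqrt_sq_eq_abs, Real.sqrt_sq hN] at this

-- slice interval lemma
lemma slice_sub (R N₂ c : ℝ) (hR : 0 < R) (hN2 : 0 < N₂) (hc : 0 < c)
    (h2 : N₂ ≤ R / 10) (h3 : c ≤ R^2 / 10) (y : ℝ) :
    {x : ℝ | |x^2 + y^2 + 2*(R*x)| ≤ c ∧ x^2 + y^2 ≤ N₂^2} ⊆
      Set.Icc (Real.sqrt (R^2 - y^2 - c) - R) (Real.sqrt (R^2 - y^2 + c) - R) := by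
  intro x hx
  obtain ⟨h1, hball⟩ := hx
  have hx2 : x^2 ≤ N₂^2 := by nlinarith [sq_nonneg y]
  have hxabs : |x| ≤ N₂ := abs_le_of_sq' hN2.le hx2
  have hxR : 0 < x + R := by
    have := abs_le.1 hxabs; linarith
  have habs := abs_le.1 h1
  have hsq1 : R^2 - y^2 - c ≤ (x+R)^2 := by nlinarith
  have hsq2 : (x+R)^2 ≤ R^2 - y^2 + c := by nlinarith
  constructor
  · have : Real.sqrt (R^2 - y^2 - c) ≤ x + R := by
      calc Real.sqrt (R^2 - y^2 - c) ≤ Real.sqrt ((x+R)^2) := Real.sqrt_le_sqrt hsq1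
        _ = x + R := Real.sqrt_sq hxR.le
    linarith
  · have : x + R ≤ Real.sqrt (R^2 - y^2 + c) := by
      rw [show x + R = Real.sqrt ((x+R)^2) from (Real.sqrt_sq hxR.le).symm]
      exact Real.sqrt_le_sqrt hsq2
    linarith

-- length of the interval
lemma interval_len (R N₂ c : ℝ) (hR : 0 < R) (hN2 : 0 < N₂) (hc : 0 < c)
    (h2 : N₂ ≤ R / 10) (h3 : c ≤ R^2 / 10) (y : ℝ) (hy : y^2 ≤ N₂^2) :
    Real.sqrt (R^2 - y^2 + c) - R - (Real.sqrt (R^2 - y^2 - c) - R) ≤ 3 * c / R := by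
  have hA : R^2 / 2 ≤ R^2 - y^2 - c := by nlinarith
  have hA0 : 0 ≤ R^2 - y^2 - c := by nlinarith
  have h13 : R / 3 ≤ Real.sqrt (R^2 - y^2 - c) := by
    rw [show R / 3 = Real.sqrt ((R/3)^2) from (Real.sqrt_sq (by positivity)).symm]
    exact Real.sqrt_le_sqrt (by nlinarith)
  have hcR : 0 < 3 * c / R := by positivity
  have key : Real.sqrt (R^2 - y^2 + c) ≤ Real.sqrt (R^2 - y^2 - c) + 3 * c / R := by
    have hs := Real.sq_sqrt hA0
    calc Real.sqrt (R^2 - y^2 + c)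
        ≤ Real.sqrt ((Real.sqrt (R^2 - y^2 - c) + 3 * c / R)^2) := by
          apply Real.sqrt_le_sqrt
          have : R * (3 * c / R) = 3 * c := by field_simp
          nlinarith [sq_nonneg (3*c/R), Real.sqrt_nonneg (R^2 - y^2 - c)]
      _ = Real.sqrt (R^2 - y^2 - c) + 3 * c / R :=
          Real.sqrt_sq (by positivity)
  linarith

lemma vol_prod (R N₂ c N₁ : ℝ) (hN1 : 0 < N₁) (hN2 : 0 < N₂) (hc : 0 < c)
    (hR : N₁ ≤ R) (h2 : N₂ ≤ N₁ / 10) (h3 : c ≤ N₁^2 / 10) :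
    volume {q : ℝ × ℝ | |q.1^2 + q.2^2 + 2*(R*q.1)| ≤ c ∧ q.1^2 + q.2^2 ≤ N₂^2}
      ≤ ENNReal.ofReal (6 * c * N₂ / N₁) := by
  have hRpos : 0 < R := lt_of_lt_of_le hN1 hR
  have h2' : N₂ ≤ R / 10 := h2.trans (by linarith)
  have h3' : c ≤ R^2 / 10 := h3.trans (by nlinarith)
  set T : Set (ℝ × ℝ) := {q | |q.1^2 + q.2^2 + 2*(R*q.1)| ≤ c ∧ q.1^2 + q.2^2 ≤ N₂^2}
  -- swap coordinates
  set T2 : Set (ℝ × ℝ) := {q | |q.2^2 + q.1^2 + 2*(R*q.2)| ≤ c ∧ q.2^2 + q.1^2 ≤ N₂^2}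
  have hT2m : MeasurableSet T2 := by
    have h1 : MeasurableSet {q : ℝ × ℝ | |q.2^2 + q.1^2 + 2*(R*q.2)| ≤ c} :=
      measurableSet_le (Measurable.abs (by fun_prop)) measurable_const
    have h2m : MeasurableSet {q : ℝ × ℝ | q.2^2 + q.1^2 ≤ N₂^2} :=
      measurableSet_le (by fun_prop) measurable_const
    have : T2 = {q : ℝ × ℝ | |q.2^2 + q.1^2 + 2*(R*q.2)| ≤ c} ∩
        {q : ℝ × ℝ | q.2^2 + q.1^2 ≤ N₂^2} := Set.setOf_and
    rw [this]; exact h1.inter h2m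
  have hswap : T = Prod.swap ⁻¹' T2 := by
    ext q; simp [T, T2, Prod.swap]
  have hvol : volume T = volume T2 := by
    rw [hswap]
    exact (Measure.measurePreserving_swap (μ := volume) (ν := volume)).measure_preimage hT2m.nullMeasurableSet
  rw [hvol]
  have : (volume : Measure (ℝ × ℝ)) = (volume : Measure ℝ).prod volume := rfl
  rw [this, Measure.prod_apply hT2m]
  have hbound : ∀ y : ℝ, volume (Prod.mk y ⁻¹' T2)
      ≤ (Set.Icc (-N₂) N₂).indicator (fun _ => ENNReal.ofReal (3 * c / R)) y := by
    intro y
    by_cases hy : y^2 ≤ N₂^2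
    · have hyI : y ∈ Set.Icc (-N₂) N₂ := by
        have := abs_le.1 (abs_le_of_sq' hN2.le hy); exact ⟨this.1, this.2⟩
      rw [Set.indicator_of_mem hyI]
      have hsub : Prod.mk y ⁻¹' T2 ⊆
          Set.Icc (Real.sqrt (R^2 - y^2 - c) - R) (Real.sqrt (R^2 - y^2 + c) - R) := by
        intro x hx
        exact slice_sub R N₂ c hRpos hN2 hc h2' h3' y hx
      calc volume (Prod.mk y ⁻¹' T2) ≤
          volume (Set.Icc (Real.sqrt (R^2 - y^2 - c) - R) (Real.sqrt (R^2 - y^2 + c) - R)) :=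
            measure_mono hsub
        _ = ENNReal.ofReal ((Real.sqrt (R^2 - y^2 + c) - R) - (Real.sqrt (R^2 - y^2 - c) - R)) :=
            Real.volume_Icc
        _ ≤ ENNReal.ofReal (3 * c / R) :=
            ENNReal.ofReal_le_ofReal (interval_len R N₂ c hRpos hN2 hc h2' h3' y hy)
    · have : Prod.mk y ⁻¹' T2 = ∅ := by
        ext x
        simp only [Set.mem_preimage, Set.mem_empty_iff_false, iff_false]
        intro hx
        exact hy (by nlinarith [hx.2, sq_nonneg x])
      rw [this]
      simp
  calc ∫⁻ y, volume (Prod.mk y ⁻¹' T2) ∂volume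
      ≤ ∫⁻ y, (Set.Icc (-N₂) N₂).indicator (fun _ => ENNReal.ofReal (3 * c / R)) y ∂volume :=
        lintegral_mono hbound
    _ = ENNReal.ofReal (3 * c / R) * volume (Set.Icc (-N₂) N₂) := by
        rw [lintegral_indicator_const measurableSet_Icc]
    _ = ENNReal.ofReal (3 * c / R) * ENNReal.ofReal (2 * N₂) := by
        rw [Real.volume_Icc]; ring_nf
    _ = ENNReal.ofReal ((3 * c / R) * (2 * N₂)) := by
        rw [← ENNReal.ofReal_mul (by positivity)]
    _ ≤ ENNReal.ofReal (6 * c * N₂ / N₁) := by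
        apply ENNReal.ofReal_le_ofReal
        rw [div_mul_eq_mul_div, div_le_div_iff₀ hRpos hN1]
        nlinarith [mul_le_mul_of_nonneg_left hR (by positivity : (0:ℝ) ≤ 6*c*N₂)]


lemma abs_le_of_sq2 {x N : ℝ} (hN : 0 ≤ N) (h : x^2 ≤ N^2) : |x| ≤ N := by
  have := Real.sqrt_le_sqrt h
  rwa [Real.sqrt_sq_eq_abs, Real.sqrt_sq hN] at this

lemma angle_num (R N₂ n t : ℝ) (hR : 0 < R) (hN2 : 0 < N₂) (hN2R : N₂ < R)
    (hn0 : 0 < n) (ht0 : 0 < t) (hq : n^2 ≤ N₂^2 + 2*t - R^2) :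
    Real.sqrt (1 - (N₂/R)^2) ≤ t / (n * R) := by
  have hRN2sq : 0 ≤ R^2 - N₂^2 := by nlinarith
  have key : Real.sqrt (R^2 - N₂^2) * n ≤ t := by
    have e1 : Real.sqrt (R^2 - N₂^2) * n = Real.sqrt ((R^2 - N₂^2) * n^2) := by
      rw [Real.sqrt_mul hRN2sq, Real.sqrt_sq hn0.le]
    rw [e1]
    calc Real.sqrt ((R^2 - N₂^2) * n^2) ≤ Real.sqrt (t^2) := by
          apply Real.sqrt_le_sqrt
          nlinarith [sq_nonneg (t - (R^2 - N₂^2)), mul_le_mul_of_nonneg_left hq hRN2sq]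
      _ = t := Real.sqrt_sq ht0.le
  have e2 : 1 - (N₂/R)^2 = (R^2 - N₂^2)/R^2 := by field_simp
  rw [e2, Real.sqrt_div hRN2sq, Real.sqrt_sq hR.le, div_le_div_iff₀ hR (by positivity)]
  calc Real.sqrt (R^2 - N₂^2) * (n * R) = (Real.sqrt (R^2 - N₂^2) * n) * R := by ring
    _ ≤ t * R := mul_le_mul_of_nonneg_right key hR.le

lemma containment_aux {E : Type*} [NormedAddCommGroup E] [InnerProductSpace ℝ E]
    (N₁ N₂ c : ℝ) (w p : E)
    (hN1 : 0 < N₁) (hN2 : 0 < N₂) (hc : 0 < c) (hw : N₁ ≤ ‖w‖)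
    (h2 : N₂ ≤ N₁ / 10) (h3 : c ≤ N₁^2 / 10)
    (hB1 : |‖p‖^2 + 2 * ⟪w, p⟫| ≤ c) (hB2 : ‖p‖^2 ≤ N₂^2) :
    Real.sqrt (‖w‖^2 - c) ≤ ‖p + w‖ ∧ ‖p + w‖ ≤ Real.sqrt (‖w‖^2 + c) ∧
      angle (p + w) w ≤ Real.arcsin (N₂ / ‖w‖) := by
  have hR : 0 < ‖w‖ := lt_of_lt_of_le hN1 hw
  have hN2R : N₂ < ‖w‖ := by linarith [h2.trans (by linarith : N₁/10 ≤ ‖w‖/10)]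
  have hcR : c < ‖w‖^2 := by nlinarith
  have hvw : ‖p + w‖^2 = ‖p‖^2 + 2*⟪w,p⟫ + ‖w‖^2 := by
    rw [norm_add_sq_real, real_inner_comm]
  have habs := abs_le.1 hB1
  have h_lo : ‖w‖^2 - c ≤ ‖p + w‖^2 := by linarith
  have h_hi : ‖p + w‖^2 ≤ ‖w‖^2 + c := by linarith
  have hpN : ‖p‖ ≤ N₂ := by
    have := abs_le_of_sq2 hN2.le hB2; rwa [abs_norm] at this
  refine ⟨?_, ?_, ?_⟩
  · calc Real.sqrt (‖w‖^2 - c) ≤ Real.sqrt (‖p+w‖^2) := Real.sqrt_le_sqrt h_lo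
      _ = ‖p+w‖ := Real.sqrt_sq (norm_nonneg _)
  · rw [show ‖p+w‖ = Real.sqrt (‖p+w‖^2) from (Real.sqrt_sq (norm_nonneg _)).symm]
    exact Real.sqrt_le_sqrt h_hi
  · have htval : (⟪p + w, w⟫ : ℝ) = ⟪w,p⟫ + ‖w‖^2 := by
      rw [inner_add_left, real_inner_self_eq_norm_sq, real_inner_comm]
    have hip : |(⟪w, p⟫ : ℝ)| ≤ N₂ * ‖w‖ := by
      calc |(⟪w, p⟫ : ℝ)| ≤ ‖w‖ * ‖p‖ := abs_real_inner_le_norm w p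
        _ ≤ ‖w‖ * N₂ := mul_le_mul_of_nonneg_left hpN hR.le
        _ = N₂ * ‖w‖ := by ring
    have ht0 : 0 < (⟪p + w, w⟫ : ℝ) := by
      have := abs_le.1 hip; nlinarith
    have hn0 : 0 < ‖p + w‖ := by
      have h1 : 0 < ‖p+w‖^2 := by nlinarith
      nlinarith [norm_nonneg (p+w)]
    have hps : ‖p‖^2 = ‖p+w‖^2 - 2*⟪p+w,w⟫ + ‖w‖^2 := by
      have h := norm_sub_sq_real (p+w) w
      rwa [add_sub_cancel_right] at h
    have hq : ‖p+w‖^2 ≤ N₂^2 + 2*⟪p+w,w⟫ - ‖w‖^2 := by linarith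
    have harg := angle_num ‖w‖ N₂ ‖p+w‖ ⟪p+w,w⟫ hR hN2 hN2R hn0 ht0 hq
    rw [angle, Real.arcsin_eq_arccos (by positivity),
      Real.arccos_eq_pi_div_two_sub_arcsin, Real.arccos_eq_pi_div_two_sub_arcsin]
    have := Real.monotone_arcsin harg
    rw [show ‖p+w‖ * ‖w‖ = ‖p+w‖ * ‖w‖ from rfl]
    linarith [Real.monotone_arcsin harg]

theorem annulus_sector_containment_and_area :
    ∃ C : ℝ, 0 < C ∧
      ∀ (N₁ N₂ c lam : ℝ) (w : EuclideanSpace ℝ (Fin 2)),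
        0 < N₁ → 0 < N₂ → 0 < c → 1 ≤ lam → N₁ ≤ ‖w‖ →
        N₂ ≤ N₁ / 10 → c ≤ N₁^2 / 10 →
        ({p : EuclideanSpace ℝ (Fin 2) |
            |(p 0)^2 + (p 1)^2 + 2 * (w 0 * p 0 + w 1 * p 1)| ≤ c ∧
            (p 0)^2 + (p 1)^2 ≤ N₂^2} ⊆
          {p : EuclideanSpace ℝ (Fin 2) |
            Real.sqrt ((w 0)^2 + (w 1)^2 - c) ≤ ‖p - (-w)‖ ∧
            ‖p - (-w)‖ ≤ Real.sqrt ((w 0)^2 + (w 1)^2 + c) ∧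
            angle (p - (-w)) w ≤ Real.arcsin (N₂ / Real.sqrt ((w 0)^2 + (w 1)^2))}) ∧
        MeasureTheory.volume
            {p : EuclideanSpace ℝ (Fin 2) |
              |(p 0)^2 + (p 1)^2 + 2 * (w 0 * p 0 + w 1 * p 1)| ≤ c ∧
              (p 0)^2 + (p 1)^2 ≤ N₂^2}
          ≤ ENNReal.ofReal (C * c * N₂ / N₁) := by
  refine ⟨6, by norm_num, ?_⟩
  intro N₁ N₂ c lam w hN1 hN2 hc hlam hw h2 h3
  have hR : 0 < ‖w‖ := lt_of_lt_of_le hN1 hw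
  -- coordinate identities
  have hnsq : ∀ q : EuclideanSpace ℝ (Fin 2), (q 0)^2 + (q 1)^2 = ‖q‖^2 := by
    intro q
    rw [EuclideanSpace.norm_eq, Real.sq_sqrt (by positivity)]
    simp [Fin.sum_univ_two, Real.norm_eq_abs, sq_abs]
  have hinner : ∀ q : EuclideanSpace ℝ (Fin 2),
      (⟪w, q⟫ : ℝ) = w 0 * q 0 + w 1 * q 1 := by
    intro q
    simp [PiLp.inner_apply, RCLike.inner_apply, conj_trivial, Fin.sum_univ_two, mul_comm]
  have hw2 : (w 0)^2 + (w 1)^2 = ‖w‖^2 := hnsq w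
  constructor
  · -- containment
    intro p hp
    obtain ⟨hp1, hp2⟩ := hp
    have hB1 : |‖p‖^2 + 2 * ⟪w, p⟫| ≤ c := by
      rw [← hnsq p, hinner p]; exact hp1
    have hB2 : ‖p‖^2 ≤ N₂^2 := by rw [← hnsq p]; exact hp2
    obtain ⟨c1, c2, c3⟩ := containment_aux N₁ N₂ c w p hN1 hN2 hc hw h2 h3 hB1 hB2
    simp only [Set.mem_setOf_eq]
    rw [hw2, sub_neg_eq_add, Real.sqrt_sq (norm_nonneg w)]
    exact ⟨c1, c2, c3⟩
  · -- volume bound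
    set TP : Set (ℝ × ℝ) :=
      {q | |q.1^2 + q.2^2 + 2*(‖w‖*q.1)| ≤ c ∧ q.1^2 + q.2^2 ≤ N₂^2} with hTPdef
    have hTPm : MeasurableSet TP := by
      have h1 : MeasurableSet {q : ℝ × ℝ | |q.1^2 + q.2^2 + 2*(‖w‖*q.1)| ≤ c} :=
        measurableSet_le (Measurable.abs (by fun_prop)) measurable_const
      have h2m : MeasurableSet {q : ℝ × ℝ | q.1^2 + q.2^2 ≤ N₂^2} :=
        measurableSet_le (by fun_prop) measurable_const
      have : TP = {q : ℝ × ℝ | |q.1^2 + q.2^2 + 2*(‖w‖*q.1)| ≤ c} ∩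
          {q : ℝ × ℝ | q.1^2 + q.2^2 ≤ N₂^2} := Set.setOf_and
      rw [this]; exact h1.inter h2m
    -- the transfer map
    set F : EuclideanSpace ℝ (Fin 2) → ℝ × ℝ :=
      fun q => MeasurableEquiv.finTwoArrow (WithLp.ofLp q) with hFdef
    have hFmp : MeasurePreserving F volume volume :=
      (volume_preserving_finTwoArrow ℝ).comp
        (PiLp.volume_preserving_ofLp (ι := Fin 2))
    have hFq : ∀ q : EuclideanSpace ℝ (Fin 2), F q = (q 0, q 1) := by
      intro q; rfl
    -- the reflection
    have hvnorm : ‖w‖ = ‖(EuclideanSpace.single 0 ‖w‖ : EuclideanSpace ℝ (Fin 2))‖ := by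
      rw [EuclideanSpace.norm_single, Real.norm_eq_abs, abs_norm]
    set g := Submodule.reflection (ℝ ∙ (w - (EuclideanSpace.single 0 ‖w‖ : EuclideanSpace ℝ (Fin 2))))ᗮ
      with hgdef
    have hgw : g w = EuclideanSpace.single 0 ‖w‖ := Submodule.reflection_sub hvnorm
    have hInnerMap : ∀ p : EuclideanSpace ℝ (Fin 2), (⟪w, p⟫ : ℝ) = ‖w‖ * (g p 0) := by
      intro p
      calc (⟪w, p⟫ : ℝ) = ⟪g w, g p⟫ := (g.inner_map_map w p).symm
        _ = ⟪(EuclideanSpace.single 0 ‖w‖ : EuclideanSpace ℝ (Fin 2)), g p⟫ := by rw [hgw]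
        _ = ‖w‖ * (g p 0) := by rw [EuclideanSpace.inner_single_left]; simp
    have hBrev : {p : EuclideanSpace ℝ (Fin 2) |
          |(p 0)^2 + (p 1)^2 + 2 * (w 0 * p 0 + w 1 * p 1)| ≤ c ∧
          (p 0)^2 + (p 1)^2 ≤ N₂^2} = ⇑g ⁻¹' (F ⁻¹' TP) := by
      ext p
      simp only [Set.mem_setOf_eq, Set.mem_preimage, hFq, hTPdef]
      have e1 : ((g p) 0)^2 + ((g p) 1)^2 = (p 0)^2 + (p 1)^2 := by
        rw [hnsq, hnsq, g.norm_map]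
      have e2 : ‖w‖ * (g p 0) = w 0 * p 0 + w 1 * p 1 := by
        rw [← hInnerMap p, hinner p]
      constructor
      · rintro ⟨ha, hb⟩
        exact ⟨by rw [e1, e2]; exact ha, by rw [e1]; exact hb⟩
      · rintro ⟨ha, hb⟩
        rw [e1, e2] at ha; rw [e1] at hb; exact ⟨ha, hb⟩
    rw [hBrev]
    have step1 : volume (⇑g ⁻¹' (F ⁻¹' TP)) = volume (F ⁻¹' TP) :=
      (g.measurePreserving).measure_preimage
        ((hTPm.preimage hFmp.measurable).nullMeasurableSet)
    have step2 : volume (F ⁻¹' TP) = volume TP :=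
      hFmp.measure_preimage hTPm.nullMeasurableSet
    rw [step1, step2]
    exact vol_prod ‖w‖ N₂ c N₁ hN1 hN2 hc hw h2 h3
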